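/- Let O be an order in an imaginary quadratic field K with conductor u. The map 𝔞 ↦ 𝔞 ∩ O gives an isomorphism from the group of fractional O_K-ideals coprime to u onto the group of fractional O-ideals coprime to u, with inverse 𝔞 ↦ 𝔞·O_K; moreover, this isomorphism preserves norms: N_O(𝔞) = N_{O_K}(𝔞·O_K) for 𝔞 coprime to u. -/

import Mathlib

open NumberField

/-- The inclusion of an order `O` of a number field `K` into the ring of integers `𝓞 K`. -/
def orderInclusion {K : Type*} [Field K] [NumberField K] (O : Subalgebra ℤ K)
    (hOint : ∀ x : O, IsIntegral ℤ (x : K)) : O →+* 𝓞 K where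
  toFun x := ⟨(x : K), hOint x⟩
  map_one' := by ext; simp; rfl
  map_mul' x y := by ext; simp; rfl
  map_zero' := by ext; simp; rfl
  map_add' x y := by ext; simp; rfl

section Aux
variable {K : Type*} [Field K] [NumberField K] (O : Subalgebra ℤ K)
  (hOint : ∀ x : O, IsIntegral ℤ (x : K)) (u : ℕ)

private def lu (hu1 : ∀ x : 𝓞 K, (u : K) * x ∈ O) (y : 𝓞 K) : O := ⟨(u : K) * y, hu1 y⟩

private lemma f_lu (hu1 : ∀ x : 𝓞 K, (u : K) * x ∈ O) (y : 𝓞 K) :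
    orderInclusion O hOint (lu O u hu1 y) = (u : 𝓞 K) * y := by
  ext; push_cast; rfl

private lemma lu_f (hu1 : ∀ x : 𝓞 K, (u : K) * x ∈ O) (x : O) :
    lu O u hu1 (orderInclusion O hOint x) = (u : O) * x := by
  apply Subtype.ext; push_cast; rfl

private lemma exists_witness (hu1 : ∀ x : 𝓞 K, (u : K) * x ∈ O)
    (𝔞 : Ideal (𝓞 K)) (h : 𝔞 ⊔ Ideal.span {(u : 𝓞 K)} = ⊤) :
    ∃ (a : O) (y : 𝓞 K), a ∈ Ideal.comap (orderInclusion O hOint) 𝔞 ∧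
      orderInclusion O hOint a = 1 - (u : 𝓞 K) ^ 2 * y ^ 2 ∧
      a + (u : O) * lu O u hu1 (y ^ 2) = 1 := by
  have h1 : (1 : 𝓞 K) ∈ 𝔞 ⊔ Ideal.span {(u : 𝓞 K)} := h ▸ Submodule.mem_top
  obtain ⟨a₀, ha₀, b, hb, hab⟩ := Submodule.mem_sup.mp h1
  obtain ⟨y, hy⟩ := Ideal.mem_span_singleton'.mp hb
  set a : O := 1 - (u : O) * lu O u hu1 (y ^ 2) with ha
  have hfa : orderInclusion O hOint a = 1 - (u : 𝓞 K) ^ 2 * y ^ 2 := by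
    rw [ha, map_sub, map_mul, map_one, map_natCast, f_lu]; ring
  refine ⟨a, y, ?_, hfa, by rw [ha]; ring⟩
  have huy : (u : 𝓞 K) * y = 1 - a₀ := by
    have hyb : y * (u : 𝓞 K) = b := hy
    rw [mul_comm, hyb, ← hab]; ring
  have key : (1 : 𝓞 K) - (u : 𝓞 K) ^ 2 * y ^ 2 = a₀ * (1 + (u : 𝓞 K) * y) := by
    have h2 : (u : 𝓞 K) ^ 2 * y ^ 2 = ((u : 𝓞 K) * y) ^ 2 := by ring
    rw [h2, huy]; ring
  show orderInclusion O hOint a ∈ 𝔞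
  rw [hfa, key]
  exact Ideal.mul_mem_right _ _ ha₀

private lemma comap_coprime (hu1 : ∀ x : 𝓞 K, (u : K) * x ∈ O)
    (𝔞 : Ideal (𝓞 K)) (h : 𝔞 ⊔ Ideal.span {(u : 𝓞 K)} = ⊤) :
    Ideal.comap (orderInclusion O hOint) 𝔞 ⊔ Ideal.span {(u : O)} = ⊤ := by
  obtain ⟨a, y, haI, -, hsum⟩ := exists_witness O hOint u hu1 𝔞 h
  rw [Ideal.eq_top_iff_one, ← hsum]
  exact Submodule.add_mem_sup haI
    (Ideal.mem_span_singleton'.mpr ⟨lu O u hu1 (y ^ 2), mul_comm _ _⟩)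

private lemma map_comap_eq (hu1 : ∀ x : 𝓞 K, (u : K) * x ∈ O)
    (𝔞 : Ideal (𝓞 K)) (h : 𝔞 ⊔ Ideal.span {(u : 𝓞 K)} = ⊤) :
    Ideal.map (orderInclusion O hOint) (Ideal.comap (orderInclusion O hOint) 𝔞) = 𝔞 := by
  refine le_antisymm Ideal.map_comap_le ?_
  obtain ⟨a, y, haI, hfa, -⟩ := exists_witness O hOint u hu1 𝔞 h
  intro x hx
  have hz : lu O u hu1 (y ^ 2 * x) ∈ Ideal.comap (orderInclusion O hOint) 𝔞 := by
    show orderInclusion O hOint _ ∈ 𝔞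
    rw [f_lu]
    exact Ideal.mul_mem_left _ _ (Ideal.mul_mem_left _ _ hx)
  have key : x = orderInclusion O hOint a * x +
      (u : 𝓞 K) * orderInclusion O hOint (lu O u hu1 (y ^ 2 * x)) := by
    rw [hfa, f_lu]; ring
  rw [key]
  exact add_mem (Ideal.mul_mem_right _ _ (Ideal.mem_map_of_mem _ haI))
    (Ideal.mul_mem_left _ _ (Ideal.mem_map_of_mem _ hz))

private lemma card_quot_eq (hu1 : ∀ x : 𝓞 K, (u : K) * x ∈ O)
    (𝔞 : Ideal (𝓞 K)) (h : 𝔞 ⊔ Ideal.span {(u : 𝓞 K)} = ⊤) :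
    Nat.card (O ⧸ Ideal.comap (orderInclusion O hOint) 𝔞) = Ideal.absNorm 𝔞 := by
  obtain ⟨a, y, haI, hfa, -⟩ := exists_witness O hOint u hu1 𝔞 h
  have hsurj : Function.Surjective (Ideal.quotientMap 𝔞 (orderInclusion O hOint) le_rfl) := by
    intro z
    obtain ⟨x, rfl⟩ := Ideal.Quotient.mk_surjective z
    refine ⟨Ideal.Quotient.mk _ ((u : O) * lu O u hu1 (y ^ 2 * x)), ?_⟩
    rw [Ideal.quotientMap_mk, Ideal.Quotient.eq]
    have heq : orderInclusion O hOint ((u : O) * lu O u hu1 (y ^ 2 * x)) - x =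
        -(orderInclusion O hOint a * x) := by
      rw [map_mul, map_natCast, f_lu, hfa]; ring
    rw [heq]
    exact neg_mem (Ideal.mul_mem_right _ _ haI)
  rw [Nat.card_congr (Equiv.ofBijective _ ⟨Ideal.quotientMap_injective, hsurj⟩),
    Ideal.absNorm_apply, Submodule.cardQuot_apply]

private lemma map_coprime (𝔟 : Ideal O) (h : 𝔟 ⊔ Ideal.span {(u : O)} = ⊤) :
    Ideal.map (orderInclusion O hOint) 𝔟 ⊔ Ideal.span {(u : 𝓞 K)} = ⊤ := by
  have h1 : (1 : O) ∈ 𝔟 ⊔ Ideal.span {(u : O)} := h ▸ Submodule.mem_top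
  obtain ⟨b, hb, c, hc, hbc⟩ := Submodule.mem_sup.mp h1
  obtain ⟨c', hc'⟩ := Ideal.mem_span_singleton'.mp hc
  rw [Ideal.eq_top_iff_one]
  have key : (1 : 𝓞 K) = orderInclusion O hOint b +
      orderInclusion O hOint c' * (u : 𝓞 K) := by
    have h2 : b + c' * (u : O) = 1 := by rw [hc']; exact hbc
    rw [← map_natCast (orderInclusion O hOint) u, ← map_mul, ← map_add, h2, map_one]
  rw [key]
  exact Submodule.add_mem_sup (Ideal.mem_map_of_mem _ hb)
    (Ideal.mem_span_singleton'.mpr ⟨_, rfl⟩)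

private lemma comap_map_eq (hu1 : ∀ x : 𝓞 K, (u : K) * x ∈ O)
    (𝔟 : Ideal O) (h : 𝔟 ⊔ Ideal.span {(u : O)} = ⊤) :
    Ideal.comap (orderInclusion O hOint) (Ideal.map (orderInclusion O hOint) 𝔟) = 𝔟 := by
  refine le_antisymm ?_ Ideal.le_comap_map
  have key : ∀ z ∈ Ideal.map (orderInclusion O hOint) 𝔟,
      ∀ r : 𝓞 K, lu O u hu1 (r * z) ∈ 𝔟 := by
    intro z hz
    refine Submodule.span_induction ?_ ?_ ?_ ?_ hz
    · rintro _ ⟨b, hb, rfl⟩ r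
      have heq : lu O u hu1 (r * orderInclusion O hOint b) = b * lu O u hu1 r := by
        apply Subtype.ext
        show (u : K) * ((r * orderInclusion O hOint b : 𝓞 K) : K) =
          (b : K) * ((u : K) * (r : K))
        push_cast
        show (u : K) * ((r : K) * (b : K)) = (b : K) * ((u : K) * (r : K))
        ring
      rw [heq]
      exact Ideal.mul_mem_right _ _ hb
    · intro r
      have heq : lu O u hu1 (r * 0) = 0 := by
        apply Subtype.ext
        show (u : K) * ((r * 0 : 𝓞 K) : K) = 0
        push_cast; ring
      rw [heq]; exact zero_mem _
    · intro z₁ z₂ _ _ ih₁ ih₂ r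
      have heq : lu O u hu1 (r * (z₁ + z₂)) = lu O u hu1 (r * z₁) + lu O u hu1 (r * z₂) := by
        apply Subtype.ext
        show (u : K) * ((r * (z₁ + z₂) : 𝓞 K) : K) =
          (u : K) * ((r * z₁ : 𝓞 K) : K) + (u : K) * ((r * z₂ : 𝓞 K) : K)
        push_cast; ring
      rw [heq]; exact add_mem (ih₁ r) (ih₂ r)
    · intro s z _ ih r
      have heq : lu O u hu1 (r * (s • z)) = lu O u hu1 ((r * s) * z) := by
        apply Subtype.ext
        show (u : K) * ((r * (s • z) : 𝓞 K) : K) = (u : K) * ((r * s * z : 𝓞 K) : K)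
        rw [smul_eq_mul]; push_cast; ring
      rw [heq]; exact ih (r * s)
  intro x hx
  have h1 : (1 : O) ∈ 𝔟 ⊔ Ideal.span {(u : O)} := h ▸ Submodule.mem_top
  obtain ⟨b, hb, c, hc, hbc⟩ := Submodule.mem_sup.mp h1
  obtain ⟨c', hc'⟩ := Ideal.mem_span_singleton'.mp hc
  have hux : (u : O) * x ∈ 𝔟 := by
    have hk := key _ hx 1
    rwa [one_mul, lu_f] at hk
  have hxeq : x = b * x + c' * ((u : O) * x) := by
    have h2 : b + c' * (u : O) = 1 := by rw [hc']; exact hbc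
    calc x = (b + c' * (u : O)) * x := by rw [h2, one_mul]
    _ = b * x + c' * ((u : O) * x) := by ring
  rw [hxeq]
  exact add_mem (Ideal.mul_mem_right _ _ hb) (Ideal.mul_mem_left _ _ hux)

private lemma comap_mul (hu1 : ∀ x : 𝓞 K, (u : K) * x ∈ O)
    (𝔞 𝔟 : Ideal (𝓞 K)) (ha : 𝔞 ⊔ Ideal.span {(u : 𝓞 K)} = ⊤)
    (hb : 𝔟 ⊔ Ideal.span {(u : 𝓞 K)} = ⊤) :
    Ideal.comap (orderInclusion O hOint) (𝔞 * 𝔟) =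
      Ideal.comap (orderInclusion O hOint) 𝔞 * Ideal.comap (orderInclusion O hOint) 𝔟 := by
  have hCa := comap_coprime O hOint u hu1 𝔞 ha
  have hCb := comap_coprime O hOint u hu1 𝔟 hb
  have hC : Ideal.comap (orderInclusion O hOint) 𝔞 * Ideal.comap (orderInclusion O hOint) 𝔟 ⊔
      Ideal.span {(u : O)} = ⊤ := by
    rw [← Ideal.isCoprime_iff_sup_eq] at hCa hCb ⊢
    exact hCa.mul_left hCb
  have hmapC : Ideal.map (orderInclusion O hOint)
      (Ideal.comap (orderInclusion O hOint) 𝔞 * Ideal.comap (orderInclusion O hOint) 𝔟) =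
      𝔞 * 𝔟 := by
    rw [Ideal.map_mul, map_comap_eq O hOint u hu1 𝔞 ha, map_comap_eq O hOint u hu1 𝔟 hb]
  rw [← hmapC, comap_map_eq O hOint u hu1 _ hC]

end Aux

/-- Let `O` be an order in an imaginary quadratic field `K` with conductor `u`. The map
`𝔞 ↦ 𝔞 ∩ O` is an isomorphism from the (fractional) ideals of `𝓞 K` coprime to `u` onto the
(fractional) ideals of `O` coprime to `u`, with inverse `𝔞 ↦ 𝔞·𝓞 K`, and it preserves norms:
`N_O(𝔞 ∩ O) = N_{𝓞 K}(𝔞)`. -/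
theorem ideal_correspondence_coprime_conductor
    (K : Type*) [Field K] [NumberField K]
    (hdeg : Module.finrank ℚ K = 2)
    (himag : ∀ v : InfinitePlace K, v.IsComplex)
    (O : Subalgebra ℤ K)
    (hOint : ∀ x : O, IsIntegral ℤ (x : K))
    (hOfull : ∃ x : O, (x : K) ∉ Set.range (algebraMap ℚ K))
    (u : ℕ) (hu0 : 0 < u)
    (hu : (∀ x : 𝓞 K, (u : K) * x ∈ O) ∧
      ∀ m : ℕ, 0 < m → (∀ x : 𝓞 K, (m : K) * x ∈ O) → u ∣ m) :
    -- `𝔞 ↦ 𝔞 ∩ O` sends ideals of `𝓞 K` coprime to `u` to ideals of `O` coprime to `u`,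
    -- is multiplicative, has `𝔟 ↦ 𝔟·𝓞 K` as two-sided inverse, and preserves norms
    (∀ 𝔞 : Ideal (𝓞 K), 𝔞 ≠ ⊥ → 𝔞 ⊔ Ideal.span {(u : 𝓞 K)} = ⊤ →
      (Ideal.comap (orderInclusion O hOint) 𝔞 ⊔ Ideal.span {(u : O)} = ⊤ ∧
        Ideal.map (orderInclusion O hOint) (Ideal.comap (orderInclusion O hOint) 𝔞) = 𝔞 ∧
        Nat.card (O ⧸ Ideal.comap (orderInclusion O hOint) 𝔞) = Ideal.absNorm 𝔞)) ∧
    (∀ 𝔞 𝔟 : Ideal (𝓞 K), 𝔞 ⊔ Ideal.span {(u : 𝓞 K)} = ⊤ → 𝔟 ⊔ Ideal.span {(u : 𝓞 K)} = ⊤ →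
      Ideal.comap (orderInclusion O hOint) (𝔞 * 𝔟) =
        Ideal.comap (orderInclusion O hOint) 𝔞 * Ideal.comap (orderInclusion O hOint) 𝔟) ∧
    (∀ 𝔟 : Ideal O, 𝔟 ≠ ⊥ → 𝔟 ⊔ Ideal.span {(u : O)} = ⊤ →
      (Ideal.map (orderInclusion O hOint) 𝔟 ⊔ Ideal.span {(u : 𝓞 K)} = ⊤ ∧
        Ideal.comap (orderInclusion O hOint) (Ideal.map (orderInclusion O hOint) 𝔟) = 𝔟)) := by
  
  obtain ⟨hu1, -⟩ := hu
  exact ⟨fun 𝔞 _ h => ⟨comap_coprime O hOint u hu1 𝔞 h, map_comap_eq O hOint u hu1 𝔞 h,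
      card_quot_eq O hOint u hu1 𝔞 h⟩,
    fun 𝔞 𝔟 ha hb => comap_mul O hOint u hu1 𝔞 𝔟 ha hb,
    fun 𝔟 _ h => ⟨map_coprime O hOint u 𝔟 h, comap_map_eq O hOint u hu1 𝔟 h⟩⟩
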